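/- (Šapirovskiĭ) If X is a regular Hausdorff space, then |X| ≤ πχ(X)^(c(X)·ψ(X)). -/

import Mathlib

open Cardinal Set TopologicalSpace

universe u

/-- The density of a space: the least cardinality of a dense subset. -/
noncomputable def dens (X : Type u) [TopologicalSpace X] : Cardinal.{u} :=
  sInf {c : Cardinal.{u} | ∃ D : Set X, Dense D ∧ #D = c}

/-- A local π-base at a point: a family of nonempty open sets such that every
open set containing the point contains a member of the family. -/
def IsLocalPiBase (X : Type u) [TopologicalSpace X] (x : X) (𝒱 : Set (Set X)) : Prop :=
  (∀ V ∈ 𝒱, IsOpen V ∧ V.Nonempty) ∧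
    ∀ U : Set X, IsOpen U → x ∈ U → ∃ V ∈ 𝒱, V ⊆ U

/-- The π-character at a point: the least infinite cardinality of a local π-base. -/
noncomputable def piCharPoint (X : Type u) [TopologicalSpace X] (x : X) : Cardinal.{u} :=
  sInf {κ : Cardinal.{u} | ℵ₀ ≤ κ ∧ ∃ 𝒱 : Set (Set X), IsLocalPiBase X x 𝒱 ∧ #𝒱 ≤ κ}

/-- The π-character of a space. -/
noncomputable def piChar (X : Type u) [TopologicalSpace X] : Cardinal.{u} :=
  ⨆ x : X, piCharPoint X x

/-- A π-base for a space. -/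
def IsPiBase (X : Type u) [TopologicalSpace X] (𝒱 : Set (Set X)) : Prop :=
  (∀ V ∈ 𝒱, IsOpen V ∧ V.Nonempty) ∧
    ∀ U : Set X, IsOpen U → U.Nonempty → ∃ V ∈ 𝒱, V ⊆ U

/-- The π-weight of a space: the least infinite cardinality of a π-base. -/
noncomputable def piWeight (X : Type u) [TopologicalSpace X] : Cardinal.{u} :=
  sInf {κ : Cardinal.{u} | ℵ₀ ≤ κ ∧ ∃ 𝒱 : Set (Set X), IsPiBase X 𝒱 ∧ #𝒱 ≤ κ}

/-- The cellularity of a space: the least infinite cardinal bounding the size of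
every pairwise disjoint family of nonempty open sets. -/
noncomputable def cellularity (X : Type u) [TopologicalSpace X] : Cardinal.{u} :=
  sInf {κ : Cardinal.{u} | ℵ₀ ≤ κ ∧ ∀ 𝒞 : Set (Set X),
    (∀ U ∈ 𝒞, IsOpen U ∧ U.Nonempty) → 𝒞.PairwiseDisjoint id → #𝒞 ≤ κ}

/-- The set of infinite cardinals κ witnessing the nonquasiregularity degree:
every nonempty open set U contains a nonempty set ⋂₀ 𝒱 with 𝒱 an open family of
size at most κ and ⋂_{V ∈ 𝒱} cl V ⊆ U. -/
def nqSet (X : Type u) [TopologicalSpace X] : Set Cardinal.{u} :=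
  {κ : Cardinal.{u} | ℵ₀ ≤ κ ∧ ∀ U : Set X, IsOpen U → U.Nonempty →
    ∃ 𝒱 : Set (Set X), (∀ V ∈ 𝒱, IsOpen V) ∧ #𝒱 ≤ κ ∧
      (⋂₀ 𝒱).Nonempty ∧ (⋂ V ∈ 𝒱, closure V) ⊆ U}

/-- A space is an nq-space if its nonquasiregularity degree is defined. -/
def IsNqSpace (X : Type u) [TopologicalSpace X] : Prop :=
  (nqSet X).Nonempty

/-- The nonquasiregularity degree of a space. -/
noncomputable def nq (X : Type u) [TopologicalSpace X] : Cardinal.{u} :=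
  sInf (nqSet X)

/-- The closed pseudocharacter at a point. -/
noncomputable def psiCPoint (X : Type u) [TopologicalSpace X] (x : X) : Cardinal.{u} :=
  sInf {κ : Cardinal.{u} | ℵ₀ ≤ κ ∧ ∃ 𝒱 : Set (Set X),
    (∀ V ∈ 𝒱, IsOpen V ∧ x ∈ V) ∧ #𝒱 ≤ κ ∧ (⋂ V ∈ 𝒱, closure V) = {x}}

/-- The closed pseudocharacter of a space. -/
noncomputable def psiC (X : Type u) [TopologicalSpace X] : Cardinal.{u} :=
  sInf {κ : Cardinal.{u} | ℵ₀ ≤ κ ∧ ∀ x : X, ∃ 𝒱 : Set (Set X),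
    (∀ V ∈ 𝒱, IsOpen V ∧ x ∈ V) ∧ #𝒱 ≤ κ ∧ (⋂ V ∈ 𝒱, closure V) = {x}}

/-- The dense closed pseudocharacter of a space. -/
noncomputable def dPsiC (X : Type u) [TopologicalSpace X] : Cardinal.{u} :=
  sInf {κ : Cardinal.{u} | ℵ₀ ≤ κ ∧ ∃ D : Set X, Dense D ∧ ∀ d ∈ D, psiCPoint X d ≤ κ}

/-- The weak closed pseudocharacter at a point: the least infinite cardinality of a
family 𝒱 of open sets with ⋂_{V ∈ 𝒱} cl V = {x}. -/
noncomputable def wPsiCPoint (X : Type u) [TopologicalSpace X] (x : X) : Cardinal.{u} :=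
  sInf {κ : Cardinal.{u} | ℵ₀ ≤ κ ∧ ∃ 𝒱 : Set (Set X),
    (∀ V ∈ 𝒱, IsOpen V) ∧ #𝒱 ≤ κ ∧ (⋂ V ∈ 𝒱, closure V) = {x}}

/-- The weak closed pseudocharacter of a space. -/
noncomputable def wPsiC (X : Type u) [TopologicalSpace X] : Cardinal.{u} :=
  ⨆ x : X, wPsiCPoint X x

/-- The pseudocharacter of a space: the least infinite cardinal κ such that every
point is the intersection of at most κ open sets. -/
noncomputable def psi (X : Type u) [TopologicalSpace X] : Cardinal.{u} :=
  sInf {κ : Cardinal.{u} | ℵ₀ ≤ κ ∧ ∀ x : X, ∃ 𝒱 : Set (Set X),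
    (∀ V ∈ 𝒱, IsOpen V) ∧ #𝒱 ≤ κ ∧ ⋂₀ 𝒱 = {x}}

/-- The Lindelöf degree of a space. -/
noncomputable def lindelofDegree (X : Type u) [TopologicalSpace X] : Cardinal.{u} :=
  sInf {κ : Cardinal.{u} | ℵ₀ ≤ κ ∧ ∀ 𝒰 : Set (Set X), (∀ U ∈ 𝒰, IsOpen U) →
    ⋃₀ 𝒰 = Set.univ → ∃ 𝒱 ⊆ 𝒰, #𝒱 ≤ κ ∧ ⋃₀ 𝒱 = Set.univ}

/-- The cardinality of the collection of regular open subsets of a space. -/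
noncomputable def cardRO (X : Type u) [TopologicalSpace X] : Cardinal.{u} :=
  #{R : Set X | R = interior (closure R)}

/-- A space is quasiregular if every nonempty open set contains a nonempty open
set whose closure is contained in it. -/
def Quasiregular (X : Type u) [TopologicalSpace X] : Prop :=
  ∀ U : Set X, IsOpen U → U.Nonempty →
    ∃ V : Set X, IsOpen V ∧ V.Nonempty ∧ closure V ⊆ U



section ShapAux

section AuxLemmas
variable {X : Type u} [TopologicalSpace X]

/-- Cellularity refinement: every open family has a small subfamily with dense union. -/
lemma cellular_refine (κ : Cardinal.{u})
    (hc : ∀ 𝒞 : Set (Set X), (∀ U ∈ 𝒞, IsOpen U ∧ U.Nonempty) → 𝒞.PairwiseDisjoint id → #𝒞 ≤ κ)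
    (𝒰 : Set (Set X)) (h𝒰 : ∀ U ∈ 𝒰, IsOpen U) :
    ∃ 𝒰', 𝒰' ⊆ 𝒰 ∧ #𝒰' ≤ κ ∧ ⋃₀ 𝒰 ⊆ closure (⋃₀ 𝒰') := by
  classical
  set S : Set (Set (Set X)) :=
    {𝒞 | (∀ C ∈ 𝒞, IsOpen C ∧ C.Nonempty ∧ ∃ U ∈ 𝒰, C ⊆ U) ∧ 𝒞.PairwiseDisjoint id} with hS
  obtain ⟨𝒞, h𝒞⟩ : ∃ m, Maximal (· ∈ S) m := by
    apply zorn_subset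
    intro c hcS hchain
    refine ⟨⋃₀ c, ⟨?_, ?_⟩, fun s hs => subset_sUnion_of_mem hs⟩
    · rintro C ⟨𝒟, h𝒟, hC⟩; exact (hcS h𝒟).1 C hC
    · intro C₁ hC₁ C₂ hC₂ hne
      obtain ⟨𝒟₁, h𝒟₁, hC₁'⟩ := hC₁
      obtain ⟨𝒟₂, h𝒟₂, hC₂'⟩ := hC₂
      rcases eq_or_ne 𝒟₁ 𝒟₂ with rfl | hD
      · exact (hcS h𝒟₁).2 hC₁' hC₂' hne
      · rcases hchain h𝒟₁ h𝒟₂ hD with h | h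
        · exact (hcS h𝒟₂).2 (h hC₁') hC₂' hne
        · exact (hcS h𝒟₁).2 hC₁' (h hC₂') hne
  have h𝒞S : 𝒞 ∈ S := h𝒞.1
  -- choice of supersets
  have hch : ∀ C ∈ 𝒞, ∃ U ∈ 𝒰, C ⊆ U := fun C hC => (h𝒞S.1 C hC).2.2
  set u : Set X → Set X := fun C => if h : ∃ U ∈ 𝒰, C ⊆ U then h.choose else ∅ with hu
  have huspec : ∀ C ∈ 𝒞, u C ∈ 𝒰 ∧ C ⊆ u C := by
    intro C hC
    have h := hch C hC
    simp only [hu, dif_pos h]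
    exact ⟨h.choose_spec.1, h.choose_spec.2⟩
  refine ⟨u '' 𝒞, ?_, ?_, ?_⟩
  · rintro _ ⟨C, hC, rfl⟩; exact (huspec C hC).1
  · exact mk_image_le.trans (hc 𝒞 (fun C hC => ⟨(h𝒞S.1 C hC).1, (h𝒞S.1 C hC).2.1⟩) h𝒞S.2)
  · -- density
    have hCU : ⋃₀ 𝒞 ⊆ ⋃₀ (u '' 𝒞) := by
      rintro y ⟨C, hC, hy⟩
      exact ⟨u C, mem_image_of_mem _ hC, (huspec C hC).2 hy⟩
    have hdense : ⋃₀ 𝒰 ⊆ closure (⋃₀ 𝒞) := by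
      rintro y ⟨U, hU, hyU⟩
      rw [mem_closure_iff]
      intro N hN hyN
      by_contra hempty
      push_neg at hempty
      set C₀ : Set X := N ∩ U with hC₀
      have hC₀open : IsOpen C₀ := hN.inter (h𝒰 U hU)
      have hC₀ne : C₀.Nonempty := ⟨y, hyN, hyU⟩
      have hC₀disj : ∀ C ∈ 𝒞, C₀ ∩ C = ∅ := by
        intro C hC
        apply subset_antisymm _ (empty_subset _)
        rw [← hempty]
        exact fun z hz => ⟨hz.1.1, C, hC, hz.2⟩
      have hC₀notmem : C₀ ∉ 𝒞 := by
        intro hmem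
        have := hC₀disj C₀ hmem
        rw [inter_self] at this
        exact hC₀ne.ne_empty this
      have hins : insert C₀ 𝒞 ∈ S := by
        constructor
        · rintro C (rfl | hC)
          · exact ⟨hC₀open, hC₀ne, U, hU, inter_subset_right⟩
          · exact h𝒞S.1 C hC
        · refine h𝒞S.2.insert fun C hC _ => ?_
          simp only [id]
          rw [Set.disjoint_iff_inter_eq_empty]
          exact hC₀disj C hC
      have := h𝒞.2 hins (subset_insert _ _)
      exact hC₀notmem (this (mem_insert _ _))
    exact hdense.trans (closure_mono hCU)
end AuxLemmas

section Enum
variable {A K : Type u}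

/-- Enumerate a small subset by an `Option`-valued function. -/
lemma exists_enum (s : Set A) (h : #s ≤ #K) :
    ∃ f : K → Option A, {a | ∃ k, f k = some a} = s := by
  classical
  obtain ⟨e⟩ := (Cardinal.le_def _ _).mp h
  refine ⟨fun k => if h : ∃ x : s, e x = k then some (h.choose : A) else none, ?_⟩
  ext a
  simp only [mem_setOf_eq]
  constructor
  · rintro ⟨k, hk⟩
    by_cases h : ∃ x : s, e x = k
    · rw [dif_pos h] at hk
      have := h.choose.2
      rwa [Option.some_inj.mp hk] at this
    · rw [dif_neg h] at hk; exact absurd hk (by simp)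
  · intro ha
    refine ⟨e ⟨a, ha⟩, ?_⟩
    have hex : ∃ x : s, e x = e ⟨a, ha⟩ := ⟨⟨a, ha⟩, rfl⟩
    rw [dif_pos hex]
    have : hex.choose = ⟨a, ha⟩ := e.injective hex.choose_spec
    rw [this]

lemma mk_subtype_mem_subset {S t : Set A} (h : t ⊆ S) : #{x : ↥S | ↑x ∈ t} = #t := by
  refine Cardinal.mk_congr ⟨fun x => ⟨x.1.1, x.2⟩, fun a => ⟨⟨a.1, h a.2⟩, a.2⟩, ?_, ?_⟩
  · rintro ⟨⟨a, hS⟩, ht⟩; rfl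
  · rintro ⟨a, ht⟩; rfl

/-- Counting subsets of a set `S` of size at most `κ`. -/
lemma mk_bounded_subsets_le (S : Set A) (κ : Cardinal.{u}) :
    #{s : Set A | s ⊆ S ∧ #s ≤ κ} ≤ (#S + 1) ^ κ := by
  classical
  set K := Quotient.out κ with hK
  have hKmk : #K = κ := mk_out κ
  have key : ∀ σ : {s : Set A | s ⊆ S ∧ #s ≤ κ},
      ∃ f : K → Option ↥S, {x : ↥S | ∃ k, f k = some x} = {x : ↥S | ↑x ∈ σ.1} := by
    intro σ
    apply exists_enum
    rw [mk_subtype_mem_subset σ.2.1, hKmk]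
    exact σ.2.2
  choose F hF using key
  have hinj : Function.Injective F := by
    intro σ τ hFeq
    have h1 : {x : ↥S | ↑x ∈ σ.1} = {x : ↥S | ↑x ∈ τ.1} := by rw [← hF σ, ← hF τ, hFeq]
    apply Subtype.ext
    have : ∀ (s : Set A) (hs : s ⊆ S), Subtype.val '' {x : ↥S | ↑x ∈ s} = s := by
      intro s hs
      ext a
      constructor
      · rintro ⟨x, hx, rfl⟩; exact hx
      · intro ha; exact ⟨⟨a, hs ha⟩, ha, rfl⟩
    rw [← this σ.1 σ.2.1, ← this τ.1 τ.2.1, h1]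
  calc #{s : Set A | s ⊆ S ∧ #s ≤ κ} ≤ #(K → Option ↥S) := mk_le_of_injective hinj
    _ = (#S + 1) ^ κ := by rw [← Cardinal.power_def, mk_option, hKmk]
end Enum


/-- Transfinite iteration of an operator on sets. -/
noncomputable def ordChain {X : Type u} (F : Set X → Set X) : Ordinal.{u} → Set X :=
  Ordinal.lt_wf.fix fun o ih => F (⋃ j : Iio o, ih j j.2)

lemma ordChain_eq {X : Type u} (F : Set X → Set X) (o : Ordinal.{u}) :
    ordChain F o = F (⋃ j : Iio o, ordChain F j) := by
  rw [ordChain, WellFounded.fix_eq]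

lemma mk_iUnion_Iio_le {X : Type u} (o : Ordinal.{u}) (g : Iio o → Set X) (μ : Cardinal.{u})
    (h : ∀ j, #(g j) ≤ μ) : #(⋃ j, g j) ≤ o.card * μ := by
  have hsurj : Function.Surjective ((Ordinal.ToType.mk (o := o)).symm : o.ToType → Iio o) :=
    (Ordinal.ToType.mk (o := o)).symm.surjective
  have heq : (⋃ i : o.ToType, g ((Ordinal.ToType.mk (o := o)).symm i)) = ⋃ j, g j :=
    hsurj.iUnion_comp g
  rw [← heq]
  calc #(⋃ i : o.ToType, g ((Ordinal.ToType.mk (o := o)).symm i))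
      ≤ #o.ToType * ⨆ i, #(g ((Ordinal.ToType.mk (o := o)).symm i)) := mk_iUnion_le _
    _ ≤ o.card * μ := by
        rw [Cardinal.mk_toType]
        exact mul_le_mul' le_rfl (ciSup_le' fun i => h _)


lemma exists_small_pibase (X : Type u) [TopologicalSpace X] [RegularSpace X] [Nonempty X]
    (κ lam : Cardinal.{u}) (hκ : ℵ₀ ≤ κ) (hlam : ℵ₀ ≤ lam)
    (hcell : ∀ 𝒞 : Set (Set X), (∀ U ∈ 𝒞, IsOpen U ∧ U.Nonempty) → 𝒞.PairwiseDisjoint id → #𝒞 ≤ κ)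
    (hpi : ∀ x : X, ∃ 𝒱, IsLocalPiBase X x 𝒱 ∧ #𝒱 ≤ lam) :
    ∃ PP : Set (Set X), IsPiBase X PP ∧ #PP ≤ lam ^ κ := by
  classical
  set μ : Cardinal.{u} := lam ^ κ with hμdef
  have hlamne : lam ≠ 0 := (aleph0_pos.trans_le hlam).ne'
  have h2 : (2 : Cardinal.{u}) ≤ lam := by
    have := (Cardinal.nat_lt_aleph0 2).le.trans hlam
    exact_mod_cast this
  have hlamμ : lam ≤ μ := by
    conv_lhs => rw [← power_one lam]
    exact power_le_power_left hlamne (one_le_aleph0.trans hκ)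
  have hμinf : ℵ₀ ≤ μ := hlam.trans hlamμ
  have hκlt : κ < μ := (cantor κ).trans_le (power_le_power_right h2)
  have hsucc : Order.succ κ ≤ μ := Order.succ_le_of_lt hκlt
  have hμμ : μ * μ = μ := mul_eq_self hμinf
  have hμpow : μ ^ κ = μ := by
    rw [hμdef, ← power_mul, mul_eq_self hκ]
  -- local π-bases
  choose Vf hVf1 hVf2 using hpi
  set VA : Set X → Set (Set X) := fun A => ⋃ x ∈ A, Vf x with hVA
  have hVAle : ∀ A : Set X, #A ≤ μ → #(VA A) ≤ μ := by
    intro A hA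
    calc #(VA A) ≤ #A * ⨆ x : A, #(Vf x) := mk_biUnion_le _ _
      _ ≤ μ * μ := mul_le_mul' hA ((ciSup_le' fun x : ↥A => hVf2 x.1).trans hlamμ)
      _ = μ := hμμ
  -- the picking operator
  set pick : Set (Set X) → X :=
    fun W : Set (Set X) => if h : (closure (⋃₀ W))ᶜ.Nonempty then h.choose else Classical.arbitrary X
    with hpickdef
  have hpick : ∀ W : Set (Set X), (closure (⋃₀ W))ᶜ.Nonempty → pick W ∉ closure (⋃₀ W) := by
    intro W h
    rw [hpickdef]
    simp only [dif_pos h]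
    exact h.choose_spec
  set F : Set X → Set X := fun A => A ∪ pick '' {W | W ⊆ VA A ∧ #W ≤ κ} with hFdef
  have hF : ∀ A : Set X, #A ≤ μ → #(F A) ≤ μ := by
    intro A hA
    have h1 : #(pick '' {W | W ⊆ VA A ∧ #W ≤ κ}) ≤ μ := by
      refine mk_image_le.trans ((mk_bounded_subsets_le (VA A) κ).trans ?_)
      calc (#(VA A) + 1) ^ κ ≤ (μ + 1) ^ κ :=
            power_le_power_right (add_le_add_left (hVAle A hA) 1)
        _ = μ ^ κ := by rw [add_one_eq hμinf]
        _ = μ := hμpow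
    calc #(F A) ≤ #A + _ := mk_union_le _ _
      _ ≤ μ + μ := add_le_add hA h1
      _ = μ := add_eq_self hμinf
  -- the chain is small
  have hchain : ∀ o : Ordinal.{u}, o.card ≤ μ → #(ordChain F o) ≤ μ := by
    intro o
    induction o using Ordinal.induction with
    | _ o IH =>
      intro ho
      rw [ordChain_eq]
      apply hF
      refine (mk_iUnion_Iio_le o _ μ fun j => IH j j.2 ((Ordinal.card_le_card j.2.le).trans ho)).trans ?_
      calc o.card * μ ≤ μ * μ := mul_le_mul' ho le_rfl
        _ = μ := hμμ
  set O : Ordinal.{u} := (Order.succ κ).ord with hOdef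
  have hOcard : O.card = Order.succ κ := card_ord _
  set D : Set X := ⋃ j : Iio O, ordChain F j with hDdef
  have hstageμ : ∀ j : Iio O, #(ordChain F j.1) ≤ μ := fun j =>
    hchain j.1 ((Ordinal.card_le_card j.2.le).trans (by rw [hOcard]; exact hsucc))
  have hD : #D ≤ μ := by
    refine (mk_iUnion_Iio_le O _ μ hstageμ).trans ?_
    rw [hOcard]
    calc Order.succ κ * μ ≤ μ * μ := mul_le_mul' hsucc le_rfl
      _ = μ := hμμ
  -- key picking property
  have keypick : ∀ W : Set (Set X), W ⊆ VA D → #W ≤ κ → (closure (⋃₀ W))ᶜ.Nonempty →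
      ∃ p ∈ D, p ∉ closure (⋃₀ W) := by
    intro W hWsub hWκ hWne
    have hstage : ∀ V : ↥W, ∃ j : Iio O, ∃ x, x ∈ ordChain F j.1 ∧ V.1 ∈ Vf x := by
      intro V
      obtain ⟨x, hxD, hVx⟩ := mem_iUnion₂.mp (hWsub V.2)
      obtain ⟨j, hj⟩ := mem_iUnion.mp hxD
      exact ⟨j, x, hj, hVx⟩
    choose jf xf hxf1 hxf2 using hstage
    have hcof : #↥W < O.cof := by
      rw [hOdef, (isRegular_succ hκ).cof_eq]
      exact hWκ.trans_lt (Order.lt_succ κ)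
    have hlim : Order.IsSuccLimit O := isSuccLimit_ord (hκ.trans (Order.le_succ κ))
    have hsuplt : (⨆ V : ↥W, Order.succ (jf V).1) < O :=
      Ordinal.iSup_lt_of_lt_cof hcof fun V => hlim.succ_lt (jf V).2
    set o : Ordinal.{u} := (⨆ V : ↥W, Order.succ (jf V).1) with hodef
    have hWsub' : W ⊆ VA (⋃ j : Iio o, ordChain F j) := by
      intro V hV
      have hjlt : (jf ⟨V, hV⟩).1 < o := by
        refine (Order.lt_succ _).trans_le ?_
        exact Ordinal.le_iSup (fun V : ↥W => Order.succ (jf V).1) ⟨V, hV⟩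
      refine mem_biUnion ?_ (hxf2 ⟨V, hV⟩)
      exact mem_iUnion.mpr ⟨⟨(jf ⟨V, hV⟩).1, hjlt⟩, hxf1 ⟨V, hV⟩⟩
    have hpmem : pick W ∈ ordChain F o := by
      rw [ordChain_eq]
      exact Or.inr (mem_image_of_mem pick ⟨hWsub', hWκ⟩)
    exact ⟨pick W, mem_iUnion.mpr ⟨⟨o, hsuplt⟩, hpmem⟩, hpick W hWne⟩
  -- PP := VA D is a π-base
  refine ⟨VA D, ⟨?_, ?_⟩, hVAle D hD⟩
  · rintro V hV
    obtain ⟨x, _, hVx⟩ := mem_iUnion₂.mp hV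
    exact (hVf1 x).1 V hVx
  · intro U hU hUne
    by_contra hno
    push_neg at hno
    obtain ⟨z, hz⟩ := hUne
    obtain ⟨C, hCnhds, hCclosed, hCU⟩ := exists_mem_nhds_isClosed_subset (hU.mem_nhds hz)
    set G : Set X := interior C with hGdef
    have hzG : z ∈ G := mem_interior_iff_mem_nhds.mpr hCnhds
    have hGU : closure G ⊆ U := (closure_minimal interior_subset hCclosed).trans hCU
    have hDnotU : ∀ x ∈ D, x ∉ U := by
      intro x hxD hxU
      obtain ⟨V, hVmem, hVsub⟩ := (hVf1 x).2 U hU hxU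
      exact hno V (mem_biUnion hxD hVmem) hVsub
    set 𝒰 : Set (Set X) := {V | V ∈ VA D ∧ V ⊆ (closure G)ᶜ} with h𝒰def
    have h𝒰open : ∀ V ∈ 𝒰, IsOpen V := by
      rintro V ⟨hV1, _⟩
      obtain ⟨x, _, hVx⟩ := mem_iUnion₂.mp hV1
      exact ((hVf1 x).1 V hVx).1
    have hDdense' : D ⊆ closure (⋃₀ 𝒰) := by
      intro x hxD
      rw [mem_closure_iff]
      intro N hN hxN
      have hxnotG : x ∉ closure G := fun h => hDnotU x hxD (hGU h)
      have hopen : IsOpen (N ∩ (closure G)ᶜ) := hN.inter isClosed_closure.isOpen_compl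
      obtain ⟨V, hVmem, hVsub⟩ := (hVf1 x).2 _ hopen ⟨hxN, hxnotG⟩
      obtain ⟨v, hv⟩ := ((hVf1 x).1 V hVmem).2
      exact ⟨v, (hVsub hv).1,
        ⟨V, ⟨mem_biUnion hxD hVmem, hVsub.trans inter_subset_right⟩, hv⟩⟩
    obtain ⟨𝒰', h𝒰'sub, h𝒰'κ, h𝒰'dense⟩ := cellular_refine κ hcell 𝒰 h𝒰open
    have hznot : (closure (⋃₀ 𝒰'))ᶜ.Nonempty := by
      refine ⟨z, fun hmem => ?_⟩
      rw [mem_closure_iff] at hmem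
      obtain ⟨y, hyG, V, hV𝒰', hyV⟩ := hmem G isOpen_interior hzG
      exact (h𝒰'sub hV𝒰').2 hyV (subset_closure hyG)
    obtain ⟨p, hpD, hpnot⟩ := keypick 𝒰' (fun V hV => (h𝒰'sub hV).1) h𝒰'κ hznot
    have hsubcl : D ⊆ closure (⋃₀ 𝒰') := by
      refine hDdense'.trans ?_
      rw [← closure_closure (s := ⋃₀ 𝒰')]
      exact closure_mono h𝒰'dense
    exact hpnot (hsubcl hpD)


lemma card_le_of_pibase (X : Type u) [TopologicalSpace X] [RegularSpace X]
    (κ μ : Cardinal.{u}) (hκ : ℵ₀ ≤ κ)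
    (hcell : ∀ 𝒞 : Set (Set X), (∀ U ∈ 𝒞, IsOpen U ∧ U.Nonempty) → 𝒞.PairwiseDisjoint id → #𝒞 ≤ κ)
    (PP : Set (Set X)) (hP : IsPiBase X PP) (hPμ : #PP ≤ μ)
    (hψ : ∀ x : X, ∃ 𝒢 : Set (Set X), (∀ G ∈ 𝒢, IsOpen G) ∧ #𝒢 ≤ κ ∧ ⋂₀ 𝒢 = {x}) :
    #X ≤ (μ + 1) ^ (κ * κ) := by
  classical
  set K : Type u := Quotient.out κ with hKdef
  have hK : #K = κ := mk_out κ
  -- regularity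
  have reg : ∀ (x : X) (G : Set X), IsOpen G → x ∈ G →
      ∃ V : Set X, IsOpen V ∧ x ∈ V ∧ closure V ⊆ G := by
    intro x G hG hx
    obtain ⟨C, hC, hCc, hCs⟩ := exists_mem_nhds_isClosed_subset (hG.mem_nhds hx)
    exact ⟨interior C, isOpen_interior, mem_interior_iff_mem_nhds.mpr hC,
      (closure_minimal interior_subset hCc).trans hCs⟩
  choose Gx hGx1 hGx2 hGx3 using hψ
  have hmemx : ∀ x : X, ∀ G ∈ Gx x, x ∈ G := by
    intro x G hG
    have : x ∈ ⋂₀ Gx x := by rw [hGx3]; rfl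
    exact this G hG
  have hr : ∀ (x : X) (G : Set X), ∃ V : Set X,
      (IsOpen G ∧ x ∈ G) → (IsOpen V ∧ x ∈ V ∧ closure V ⊆ G) := by
    intro x G
    by_cases h : IsOpen G ∧ x ∈ G
    · exact (reg x G h.1 h.2).imp fun V hV _ => hV
    · exact ⟨∅, fun hc => absurd hc h⟩
  choose r hrspec using hr
  set N : X → Set (Set X) := fun x => r x '' Gx x with hNdef
  have hNx : ∀ x : X, ∀ V ∈ N x, IsOpen V ∧ x ∈ V := by
    rintro x V ⟨G, hG, rfl⟩
    have spec := hrspec x G ⟨hGx1 x G hG, hmemx x G hG⟩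
    exact ⟨spec.1, spec.2.1⟩
  have hNxκ : ∀ x : X, #(N x) ≤ κ := fun x => mk_image_le.trans (hGx2 x)
  have hNxsingle : ∀ x : X, (⋂ V ∈ N x, closure V) = {x} := by
    intro x
    apply subset_antisymm
    · intro y hy
      rw [← hGx3 x]
      intro G hG
      have spec := hrspec x G ⟨hGx1 x G hG, hmemx x G hG⟩
      have hyc : y ∈ closure (r x G) := by
        have := mem_iInter₂.mp hy (r x G) (mem_image_of_mem _ hG)
        exact this
      exact spec.2.2 hyc
    · rw [singleton_subset_iff]
      exact mem_iInter₂.mpr fun V hV => subset_closure (hNx x V hV).2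
  -- trace families on the π-base
  have hBex : ∀ V : Set X, ∃ B' : Set (Set X), B' ⊆ {B | B ∈ PP ∧ B ⊆ V} ∧ #B' ≤ κ ∧
      ⋃₀ {B | B ∈ PP ∧ B ⊆ V} ⊆ closure (⋃₀ B') :=
    fun V => cellular_refine κ hcell _ (fun B hB => (hP.1 B hB.1).1)
  choose Bf hBf1 hBf2 hBf3 using hBex
  have hBfPP : ∀ V : Set X, Bf V ⊆ PP := fun V B hB => (hBf1 V hB).1
  have htrace : ∀ x : X, ∀ V ∈ N x,
      x ∈ closure (⋃₀ Bf V) ∧ closure (⋃₀ Bf V) ⊆ closure V := by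
    intro x V hV
    have hVopen := (hNx x V hV).1
    have hxV := (hNx x V hV).2
    constructor
    · have hdense : V ⊆ closure (⋃₀ {B | B ∈ PP ∧ B ⊆ V}) := by
        intro y hy
        rw [mem_closure_iff]
        intro Nn hNn hyN
        obtain ⟨B, hB, hBsub⟩ := hP.2 (Nn ∩ V) (hNn.inter hVopen) ⟨y, hyN, hy⟩
        obtain ⟨b, hb⟩ := (hP.1 B hB).2
        exact ⟨b, (hBsub hb).1, B, ⟨hB, hBsub.trans inter_subset_right⟩, hb⟩
      have h2 : closure (⋃₀ {B | B ∈ PP ∧ B ⊆ V}) ⊆ closure (⋃₀ Bf V) := by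
        rw [← closure_closure (s := ⋃₀ Bf V)]
        exact closure_mono (hBf3 V)
      exact h2 (hdense hxV)
    · refine closure_mono ?_
      rintro y ⟨B, hB, hyB⟩
      exact (hBf1 V hB).2 hyB
  have hxint : ∀ x : X, (⋂ V ∈ N x, closure (⋃₀ Bf V)) = {x} := by
    intro x
    apply subset_antisymm
    · refine subset_trans ?_ (hNxsingle x).subset
      intro y hy
      exact mem_iInter₂.mpr fun V hV => (htrace x V hV).2 (mem_iInter₂.mp hy V hV)
    · rw [singleton_subset_iff]
      exact mem_iInter₂.mpr fun V hV => (htrace x V hV).1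
  have hBne : ∀ x : X, ∀ V ∈ N x, (Bf V).Nonempty := by
    intro x V hV
    rcases eq_empty_or_nonempty (Bf V) with h | h
    · exfalso
      have := (htrace x V hV).1
      rw [h] at this
      simp at this
    · exact h
  -- enumerations
  have hNenum : ∀ x : X, ∃ f : K → Option (Set X), {V | ∃ k, f k = some V} = N x :=
    fun x => exists_enum (N x) (by rw [hK]; exact hNxκ x)
  choose f1 hf1 using hNenum
  have hBenum : ∀ V : Set X, ∃ g : K → Option ↥PP,
      {B | ∃ k, g k = some B} = {B : ↥PP | ↑B ∈ Bf V} :=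
    fun V => exists_enum _ (by rw [mk_subtype_mem_subset (hBfPP V), hK]; exact hBf2 V)
  choose f2 hf2 using hBenum
  -- the encoding
  set Enc : X → K → K → Option ↥PP :=
    fun x i j => (f1 x i).elim none (fun V => f2 V j) with hEncdef
  set row : (K → Option ↥PP) → Set (Set X) :=
    fun g => Subtype.val '' {B : ↥PP | ∃ k, g k = some B} with hrowdef
  have hrow : ∀ (x : X) (i : K),
      (f1 x i = none → row (Enc x i) = ∅) ∧
      (∀ V, f1 x i = some V → row (Enc x i) = Bf V) := by
    intro x i
    constructor
    · intro h
      show Subtype.val '' {B : ↥PP | ∃ k, Enc x i k = some B} = ∅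
      have : {B : ↥PP | ∃ k, Enc x i k = some B} = ∅ := by
        ext B; simp [hEncdef, h]
      rw [this, image_empty]
    · intro V h
      show Subtype.val '' {B : ↥PP | ∃ k, Enc x i k = some B} = Bf V
      have h1 : {B : ↥PP | ∃ k, Enc x i k = some B} = {B : ↥PP | ↑B ∈ Bf V} := by
        rw [← hf2 V]
        ext B; simp [hEncdef, h]
      rw [h1]
      ext B
      constructor
      · rintro ⟨B', hB', rfl⟩; exact hB'
      · intro hB; exact ⟨⟨B, hBfPP V hB⟩, hB, rfl⟩
  have hdec : ∀ x : X,
      {y : X | ∀ i : K, (row (Enc x i)).Nonempty → y ∈ closure (⋃₀ row (Enc x i))} = {x} := by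
    intro x
    have : {y : X | ∀ i : K, (row (Enc x i)).Nonempty → y ∈ closure (⋃₀ row (Enc x i))}
        = ⋂ V ∈ N x, closure (⋃₀ Bf V) := by
      ext y
      simp only [mem_setOf_eq]
      constructor
      · intro hy
        refine mem_iInter₂.mpr fun V hV => ?_
        have : V ∈ {V | ∃ k, f1 x k = some V} := by rw [hf1 x]; exact hV
        obtain ⟨i, hi⟩ := this
        have hr := (hrow x i).2 V hi
        have hne : (row (Enc x i)).Nonempty := by rw [hr]; exact hBne x V hV
        have := hy i hne
        rwa [hr] at this
      · intro hy i hne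
        rcases hcase : f1 x i with _ | V
        · exfalso
          rw [(hrow x i).1 hcase] at hne
          exact hne.ne_empty rfl
        · have hVN : V ∈ N x := by
            rw [← hf1 x]; exact ⟨i, hcase⟩
          rw [(hrow x i).2 V hcase]
          exact mem_iInter₂.mp hy V hVN
    rw [this, hxint]
  have hinj : Function.Injective Enc := by
    intro x y hxy
    have : ({x} : Set X) = {y} := by rw [← hdec x, ← hdec y, hxy]
    exact singleton_eq_singleton_iff.mp this
  calc #X ≤ #(K → K → Option ↥PP) := mk_le_of_injective hinj
    _ = ((#PP + 1) ^ κ) ^ κ := by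
        rw [← Cardinal.power_def, ← Cardinal.power_def, mk_option, hK]
    _ = (#PP + 1) ^ (κ * κ) := (power_mul ..).symm
    _ ≤ (μ + 1) ^ (κ * κ) := power_le_power_right (add_le_add_left hPμ 1)

end ShapAux

/-- Šapirovskiĭ: If `X` is regular and Hausdorff then
`|X| ≤ πχ(X)^(c(X)·ψ(X))`. -/
theorem stmt_16 (X : Type u) [TopologicalSpace X] [RegularSpace X] [T2Space X] :
    #X ≤ piChar X ^ (cellularity X * psi X) := by
  classical
  rcases isEmpty_or_nonempty X with hE | hNE
  · rw [Cardinal.mk_eq_zero X]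
    exact zero_le
  · set κ0 : Cardinal.{u} := max (2 ^ #X) ℵ₀ with hκ0def
    have hbig : ∀ (𝒞 : Set (Set X)), #𝒞 ≤ κ0 := fun 𝒞 =>
      ((mk_set_le 𝒞).trans_eq mk_set).trans (le_max_left _ _)
    -- cellularity facts
    have hcellmem : ℵ₀ ≤ cellularity X ∧ ∀ 𝒞 : Set (Set X),
        (∀ U ∈ 𝒞, IsOpen U ∧ U.Nonempty) → 𝒞.PairwiseDisjoint id → #𝒞 ≤ cellularity X := by
      have hne : {κ : Cardinal.{u} | ℵ₀ ≤ κ ∧ ∀ 𝒞 : Set (Set X),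
          (∀ U ∈ 𝒞, IsOpen U ∧ U.Nonempty) → 𝒞.PairwiseDisjoint id → #𝒞 ≤ κ}.Nonempty :=
        ⟨κ0, le_max_right _ _, fun 𝒞 _ _ => hbig 𝒞⟩
      exact csInf_mem hne
    -- psi facts
    have hT1 : ∀ x : X, ⋂₀ {U : Set X | IsOpen U ∧ x ∈ U} = {x} := by
      intro x
      apply subset_antisymm
      · intro y hy
        by_contra hxy
        have hxyne : x ≠ y := fun h => hxy (by rw [h]; rfl)
        have : y ∈ ({y}ᶜ : Set X) :=
          hy {y}ᶜ ⟨isOpen_compl_singleton, fun h => hxyne (mem_singleton_iff.mp h)⟩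
        exact this rfl
      · rw [singleton_subset_iff]
        exact fun U hU => hU.2
    have hpsimem : ℵ₀ ≤ psi X ∧ ∀ x : X, ∃ 𝒱 : Set (Set X),
        (∀ V ∈ 𝒱, IsOpen V) ∧ #𝒱 ≤ psi X ∧ ⋂₀ 𝒱 = {x} := by
      have hne : {κ : Cardinal.{u} | ℵ₀ ≤ κ ∧ ∀ x : X, ∃ 𝒱 : Set (Set X),
          (∀ V ∈ 𝒱, IsOpen V) ∧ #𝒱 ≤ κ ∧ ⋂₀ 𝒱 = {x}}.Nonempty :=
        ⟨κ0, le_max_right _ _, fun x =>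
          ⟨{U : Set X | IsOpen U ∧ x ∈ U}, fun U hU => hU.1, hbig _, hT1 x⟩⟩
      exact csInf_mem hne
    -- π-character facts
    have hpcp : ∀ x : X, ℵ₀ ≤ piCharPoint X x ∧
        ∃ 𝒱, IsLocalPiBase X x 𝒱 ∧ #𝒱 ≤ piCharPoint X x := by
      intro x
      have hne : {κ : Cardinal.{u} | ℵ₀ ≤ κ ∧ ∃ 𝒱 : Set (Set X),
          IsLocalPiBase X x 𝒱 ∧ #𝒱 ≤ κ}.Nonempty :=
        ⟨κ0, le_max_right _ _, ⟨{V : Set X | IsOpen V ∧ V.Nonempty},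
          ⟨fun V hV => hV, fun U hU hx => ⟨U, ⟨hU, ⟨x, hx⟩⟩, subset_rfl⟩⟩, hbig _⟩⟩
      exact csInf_mem hne
    have hple : ∀ x : X, piCharPoint X x ≤ piChar X :=
      fun x => le_ciSup (Cardinal.bddAbove_range _) x
    have x0 : X := Classical.arbitrary X
    have hlam : ℵ₀ ≤ piChar X := (hpcp x0).1.trans (hple x0)
    set κ : Cardinal.{u} := cellularity X * psi X with hκdef
    have hone_p : (1 : Cardinal.{u}) ≤ psi X := one_le_aleph0.trans hpsimem.1
    have hone_c : (1 : Cardinal.{u}) ≤ cellularity X := one_le_aleph0.trans hcellmem.1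
    have hcκ : cellularity X ≤ κ := by
      rw [hκdef]
      calc cellularity X = cellularity X * 1 := (mul_one _).symm
        _ ≤ cellularity X * psi X := mul_le_mul_right hone_p _
    have hpκ : psi X ≤ κ := by
      rw [hκdef]
      calc psi X = 1 * psi X := (one_mul _).symm
        _ ≤ cellularity X * psi X := mul_le_mul_left hone_c _
    have hκ : ℵ₀ ≤ κ := hcellmem.1.trans hcκ
    have hcellκ : ∀ 𝒞 : Set (Set X),
        (∀ U ∈ 𝒞, IsOpen U ∧ U.Nonempty) → 𝒞.PairwiseDisjoint id → #𝒞 ≤ κ :=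
      fun 𝒞 h1 h2 => (hcellmem.2 𝒞 h1 h2).trans hcκ
    have hpi : ∀ x : X, ∃ 𝒱, IsLocalPiBase X x 𝒱 ∧ #𝒱 ≤ piChar X :=
      fun x => (hpcp x).2.imp fun 𝒱 h => ⟨h.1, h.2.trans (hple x)⟩
    have hψκ : ∀ x : X, ∃ 𝒢 : Set (Set X),
        (∀ G ∈ 𝒢, IsOpen G) ∧ #𝒢 ≤ κ ∧ ⋂₀ 𝒢 = {x} :=
      fun x => (hpsimem.2 x).imp fun 𝒢 h => ⟨h.1, h.2.1.trans hpκ, h.2.2⟩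
    obtain ⟨PP, hPP, hPPle⟩ := exists_small_pibase X κ (piChar X) hκ hlam hcellκ hpi
    have hfin := card_le_of_pibase X κ (piChar X ^ κ) hκ hcellκ PP hPP hPPle hψκ
    have hlamne : piChar X ≠ 0 := (aleph0_pos.trans_le hlam).ne'
    have hμinf : ℵ₀ ≤ piChar X ^ κ := by
      refine hlam.trans ?_
      conv_lhs => rw [← power_one (piChar X)]
      exact power_le_power_left hlamne (one_le_aleph0.trans hκ)
    calc #X ≤ (piChar X ^ κ + 1) ^ (κ * κ) := hfin
      _ = (piChar X ^ κ) ^ (κ * κ) := by rw [add_one_eq hμinf]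
      _ = piChar X ^ (κ * (κ * κ)) := by rw [← power_mul]
      _ = piChar X ^ κ := by rw [mul_eq_self hκ, mul_eq_self hκ]
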